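/- Let λ, μ ∈ ℝ and let H : (Fin 3)⁶ → ℝ be a sixth-order tensor satisfying the symmetries H_{ijklmn} = H_{ikjlmn} = H_{ijklnm} = H_{lmnijk}. Define the operator A₊ acting on pairs (u, ν̃) of a smooth vector field u : ℝ³ → ℝ³ and a smooth symmetric-triadic-valued field ν̃ : ℝ³ → (Fin 3)³ → ℝ by: first component (A₊(u,ν̃)¹)_k = −(Δ*·u)_k + Σ_{i,j} ∂_i∂_j (H⫶ν̃)_{ijk}, second component (A₊(u,ν̃)²)_{ijk} = (H⫶∇e(u))_{ijk} − (H⫶ν̃)_{ijk}. Then A₊ is formally symmetric on compactly supported fields: for all smooth, compactly supported pairs (u₁, ν̃₁) and (u₂, ν̃₂) with ν̃₁(x), ν̃₂(x) symmetric triadics for every x, ∫_{ℝ³} Σ_k u₁ₖ (A₊(u₂,ν̃₂)¹)_k dx + ∫_{ℝ³} Σ_{i,j,k} (ν̃₁)_{ijk} (A₊(u₂,ν̃₂)²)_{ijk} dx = ∫_{ℝ³} Σ_k (A₊(u₁,ν̃₁)¹)_k u₂ₖ dx + ∫_{ℝ³} Σ_{i,j,k} (A₊(u₁,ν̃₁)²)_{ijk}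 (ν̃₂)_{ijk} dx. -/

import Mathlib

open MeasureTheory

noncomputable section

/-- Points of `ℝ³`. -/
abbrev V : Type := Fin 3 → ℝ

/-- `i`-th partial derivative of a scalar field on `ℝ³`. -/
noncomputable def pd (i : Fin 3) (f : V → ℝ) : V → ℝ :=
  fun x => fderiv ℝ f x (Pi.single i 1)

/-- Divergence of a vector field. -/
noncomputable def divg (u : V → V) : V → ℝ :=
  fun x => ∑ j : Fin 3, pd j (fun y => u y j) x

/-- Componentwise Laplacian of a vector field. -/
noncomputable def vlap (u : V → V) (k : Fin 3) : V → ℝ :=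
  fun x => ∑ j : Fin 3, pd j (pd j (fun y => u y k)) x

/-- The strain tensor `e_{jk}(u) = ½(∂_j u_k + ∂_k u_j)`. -/
noncomputable def strain (u : V → V) (j k : Fin 3) : V → ℝ :=
  fun x => (1/2) * (pd j (fun y => u y k) x + pd k (fun y => u y j) x)

/-- The Lamé (Navier) operator `(Δ*·u)_k = μ (Δu)_k + (λ+μ) ∂_k (div u)`. -/
noncomputable def navier (lam mu : ℝ) (u : V → V) (k : Fin 3) : V → ℝ :=
  fun x => mu * vlap u k x + (lam + mu) * pd k (divg u) x

/-- The gradient of the strain, `(∇e(u))_{ijk} = ∂_i e_{jk}(u)`. -/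
noncomputable def gradStrain (u : V → V) (i j k : Fin 3) : V → ℝ :=
  pd i (strain u j k)

/-- Contraction of a sixth order tensor with a triadic:
`(H⫶κ)_{ijk} = Σ_{l,m,n} H_{ijklmn} κ_{lmn}`. -/
def Hcontr (H : Fin 3 → Fin 3 → Fin 3 → Fin 3 → Fin 3 → Fin 3 → ℝ)
    (κ : Fin 3 → Fin 3 → Fin 3 → ℝ) (i j k : Fin 3) : ℝ :=
  ∑ l : Fin 3, ∑ m : Fin 3, ∑ n : Fin 3, H i j k l m n * κ l m n

/-- A triadic is symmetric if it is symmetric in its last two indices. -/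
def SymTriadic (κ : Fin 3 → Fin 3 → Fin 3 → ℝ) : Prop :=
  ∀ i j k, κ i j k = κ i k j

/-- The symmetries `H_{ijklmn} = H_{ikjlmn} = H_{ijklnm} = H_{lmnijk}`. -/
def Hsym (H : Fin 3 → Fin 3 → Fin 3 → Fin 3 → Fin 3 → Fin 3 → ℝ) : Prop :=
  ∀ i j k l m n, H i j k l m n = H i k j l m n ∧
    H i j k l m n = H i j k l n m ∧ H i j k l m n = H l m n i j k

/-- Positivity of `H` with constant `α` on symmetric triadics. -/
def Hpos (H : Fin 3 → Fin 3 → Fin 3 → Fin 3 → Fin 3 → Fin 3 → ℝ) (α : ℝ) : Prop :=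
  ∀ κ : Fin 3 → Fin 3 → Fin 3 → ℝ, SymTriadic κ →
    α * (∑ i : Fin 3, ∑ j : Fin 3, ∑ k : Fin 3, (κ i j k)^2) ≤
      ∑ i : Fin 3, ∑ j : Fin 3, ∑ k : Fin 3, ∑ l : Fin 3, ∑ m : Fin 3, ∑ n : Fin 3,
        κ i j k * H i j k l m n * κ l m n

/-- The double stress tensor of Mindlin Form II gradient elasticity with constitutive
parameters `a₁,…,a₅`. -/
noncomputable def dstress (a1 a2 a3 a4 a5 : ℝ) (u : V → V) (i j k : Fin 3) : V → ℝ :=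
  fun x =>
    (1/2) * a1 * ((if j = k then (1:ℝ) else 0) * vlap u i x
      + (if i = j then (1:ℝ) else 0) * pd k (divg u) x
      + (if j = k then (1:ℝ) else 0) * pd i (divg u) x
      + (if i = k then (1:ℝ) else 0) * pd j (divg u) x)
    + 2 * a2 * (if j = k then (1:ℝ) else 0) * pd i (divg u) x
    + (1/2) * a3 * ((if i = j then (1:ℝ) else 0) * vlap u k x
      + (if i = j then (1:ℝ) else 0) * pd k (divg u) x
      + (if i = k then (1:ℝ) else 0) * vlap u j x
      + (if i = k then (1:ℝ) else 0) * pd j (divg u) x)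
    + a4 * (pd i (pd j (fun y => u y k)) x + pd i (pd k (fun y => u y j)) x)
    + (1/2) * a5 * (2 * pd j (pd k (fun y => u y i)) x
      + pd i (pd j (fun y => u y k)) x + pd i (pd k (fun y => u y j)) x)

/-! ### Auxiliary lemmas -/

lemma pd_contDiff {f : V → ℝ} (hf : ContDiff ℝ (⊤:ℕ∞) f) (i : Fin 3) :
    ContDiff ℝ (⊤:ℕ∞) (pd i f) :=
  (hf.fderiv_right (m := (⊤:ℕ∞)) (by exact_mod_cast le_top)).clm_apply contDiff_const

lemma pd_hcs {f : V → ℝ} (hc : HasCompactSupport f) (i : Fin 3) :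
    HasCompactSupport (pd i f) :=
  hc.fderiv_apply ℝ (Pi.single i 1)

lemma integ_mul_l {f g : V → ℝ} (hf : Continuous f) (hg : Continuous g)
    (hc : HasCompactSupport f) : Integrable (fun x => f x * g x) :=
  (hf.mul hg).integrable_of_hasCompactSupport hc.mul_right

lemma integ_mul_r {f g : V → ℝ} (hf : Continuous f) (hg : Continuous g)
    (hc : HasCompactSupport g) : Integrable (fun x => f x * g x) :=
  (hf.mul hg).integrable_of_hasCompactSupport hc.mul_left

lemma ibp (i : Fin 3) {f g : V → ℝ} (hf : ContDiff ℝ (⊤:ℕ∞) f) (hg : ContDiff ℝ (⊤:ℕ∞) g)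
    (hc : HasCompactSupport f) :
    ∫ x : V, f x * pd i g x = - ∫ x : V, pd i f x * g x := by
  apply integral_mul_fderiv_eq_neg_fderiv_mul_of_integrable
  · exact integ_mul_l ((pd_contDiff hf i).continuous) hg.continuous (pd_hcs hc i)
  · exact integ_mul_l hf.continuous ((pd_contDiff hg i).continuous) hc
  · exact integ_mul_l hf.continuous hg.continuous hc
  · exact fun x _ => hf.differentiable (by simp) x
  · exact fun x _ => hg.differentiable (by simp) x

lemma pd_comm {f : V → ℝ} (hf : ContDiff ℝ (⊤:ℕ∞) f) (i j : Fin 3) (x : V) :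
    pd i (pd j f) x = pd j (pd i f) x := by
  have hd : Differentiable ℝ (fderiv ℝ f) :=
    (hf.fderiv_right (m := (⊤:ℕ∞)) (by exact_mod_cast le_top)).differentiable
      (by simp)
  have h1 : ∀ (v w : V),
      fderiv ℝ (fun y => fderiv ℝ f y v) x w = fderiv ℝ (fderiv ℝ f) x w v := by
    intro v w
    have : (fun y => fderiv ℝ f y v)
        = (ContinuousLinearMap.apply ℝ ℝ v) ∘ (fderiv ℝ f) := rfl
    rw [this, fderiv_comp x (ContinuousLinearMap.apply ℝ ℝ v).differentiableAt (hd x)]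
    simp
  unfold pd
  rw [h1, h1]
  exact second_derivative_symmetric
    (fun y => (hf.differentiable (by simp) y).hasFDerivAt)
    (hd x).hasFDerivAt _ _

lemma ibp2 (i j : Fin 3) {f g : V → ℝ} (hf : ContDiff ℝ (⊤:ℕ∞) f) (hg : ContDiff ℝ (⊤:ℕ∞) g)
    (hc : HasCompactSupport f) :
    ∫ x : V, f x * pd i (pd j g) x = ∫ x : V, pd i (pd j f) x * g x := by
  rw [ibp i hf (pd_contDiff hg j) hc]
  have h2 : ∫ x : V, pd i f x * pd j g x = - ∫ x : V, pd j (pd i f) x * g x :=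
    ibp j (pd_contDiff hf i) hg (pd_hcs hc i)
  rw [h2, neg_neg]
  refine integral_congr_ae (Filter.Eventually.of_forall fun x => ?_)
  show pd j (pd i f) x * g x = pd i (pd j f) x * g x
  rw [pd_comm hf i j]

lemma isum3 (F : Fin 3 → Fin 3 → Fin 3 → V → ℝ) (h : ∀ i j k, Integrable (F i j k)) :
    ∫ x : V, ∑ i : Fin 3, ∑ j : Fin 3, ∑ k : Fin 3, F i j k x
      = ∑ i : Fin 3, ∑ j : Fin 3, ∑ k : Fin 3, ∫ x : V, F i j k x := by
  have h2 : ∀ i j, Integrable (fun x => ∑ k : Fin 3, F i j k x) :=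
    fun i j => integrable_finset_sum _ (fun k _ => h i j k)
  have h1 : ∀ i, Integrable (fun x => ∑ j : Fin 3, ∑ k : Fin 3, F i j k x) :=
    fun i => integrable_finset_sum _ (fun j _ => h2 i j)
  rw [integral_finset_sum _ (fun i _ => h1 i)]
  refine Finset.sum_congr rfl fun i _ => ?_
  rw [integral_finset_sum _ (fun j _ => h2 i j)]
  exact Finset.sum_congr rfl fun j _ => integral_finset_sum _ (fun k _ => h i j k)

lemma isum2 (F : Fin 3 → Fin 3 → V → ℝ) (h : ∀ i j, Integrable (F i j)) :
    ∫ x : V, ∑ i : Fin 3, ∑ j : Fin 3, F i j x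
      = ∑ i : Fin 3, ∑ j : Fin 3, ∫ x : V, F i j x := by
  have h1 : ∀ i, Integrable (fun x => ∑ j : Fin 3, F i j x) :=
    fun i => integrable_finset_sum _ (fun j _ => h i j)
  rw [integral_finset_sum _ (fun i _ => h1 i)]
  exact Finset.sum_congr rfl fun i _ => integral_finset_sum _ (fun j _ => h i j)

lemma sum3_rot (f : Fin 3 → Fin 3 → Fin 3 → ℝ) :
    ∑ k : Fin 3, ∑ i : Fin 3, ∑ j : Fin 3, f i j k
      = ∑ i : Fin 3, ∑ j : Fin 3, ∑ k : Fin 3, f i j k := by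
  rw [Finset.sum_comm]
  exact Finset.sum_congr rfl fun i _ => Finset.sum_comm

lemma sum3_prod (f : Fin 3 → Fin 3 → Fin 3 → ℝ) :
    ∑ i : Fin 3, ∑ j : Fin 3, ∑ k : Fin 3, f i j k
      = ∑ p : Fin 3 × Fin 3 × Fin 3, f p.1 p.2.1 p.2.2 := by
  rw [Fintype.sum_prod_type]
  exact Finset.sum_congr rfl fun i _ => by rw [Fintype.sum_prod_type]

lemma contract_symm {H : Fin 3 → Fin 3 → Fin 3 → Fin 3 → Fin 3 → Fin 3 → ℝ} (hH : Hsym H)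
    (a b : Fin 3 → Fin 3 → Fin 3 → ℝ) :
    ∑ i : Fin 3, ∑ j : Fin 3, ∑ k : Fin 3, a i j k * Hcontr H b i j k
      = ∑ i : Fin 3, ∑ j : Fin 3, ∑ k : Fin 3, Hcontr H a i j k * b i j k := by
  have expand : ∀ (a b : Fin 3 → Fin 3 → Fin 3 → ℝ),
      (∀ i j k, a i j k * Hcontr H b i j k
        = ∑ q : Fin 3 × Fin 3 × Fin 3,
            a i j k * (H i j k q.1 q.2.1 q.2.2 * b q.1 q.2.1 q.2.2)) := by
    intro a b i j k
    simp only [Hcontr, Finset.mul_sum]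
    exact sum3_prod (fun l m n => a i j k * (H i j k l m n * b l m n))
  calc ∑ i : Fin 3, ∑ j : Fin 3, ∑ k : Fin 3, a i j k * Hcontr H b i j k
      = ∑ p : Fin 3 × Fin 3 × Fin 3, ∑ q : Fin 3 × Fin 3 × Fin 3,
          a p.1 p.2.1 p.2.2 * (H p.1 p.2.1 p.2.2 q.1 q.2.1 q.2.2 * b q.1 q.2.1 q.2.2) := by
        rw [sum3_prod (fun i j k => a i j k * Hcontr H b i j k)]
        exact Finset.sum_congr rfl fun p _ => by rw [expand]
    _ = ∑ q : Fin 3 × Fin 3 × Fin 3, ∑ p : Fin 3 × Fin 3 × Fin 3,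
          a p.1 p.2.1 p.2.2 * (H p.1 p.2.1 p.2.2 q.1 q.2.1 q.2.2 * b q.1 q.2.1 q.2.2) :=
        Finset.sum_comm
    _ = ∑ i : Fin 3, ∑ j : Fin 3, ∑ k : Fin 3, Hcontr H a i j k * b i j k := by
        rw [sum3_prod (fun i j k => Hcontr H a i j k * b i j k)]
        refine Finset.sum_congr rfl fun q _ => ?_
        have : Hcontr H a q.1 q.2.1 q.2.2 * b q.1 q.2.1 q.2.2
            = ∑ p : Fin 3 × Fin 3 × Fin 3,
                b q.1 q.2.1 q.2.2 * (H q.1 q.2.1 q.2.2 p.1 p.2.1 p.2.2 * a p.1 p.2.1 p.2.2) := by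
          rw [mul_comm, expand]
        rw [this]
        refine Finset.sum_congr rfl fun p _ => ?_
        rw [(hH p.1 p.2.1 p.2.2 q.1 q.2.1 q.2.2).2.2]
        ring

lemma Hcontr_symm23 {H : Fin 3 → Fin 3 → Fin 3 → Fin 3 → Fin 3 → Fin 3 → ℝ} (hH : Hsym H)
    (w : Fin 3 → Fin 3 → Fin 3 → ℝ) (i j k : Fin 3) :
    Hcontr H w i k j = Hcontr H w i j k := by
  unfold Hcontr
  refine Finset.sum_congr rfl fun l _ => Finset.sum_congr rfl fun m _ =>
    Finset.sum_congr rfl fun n _ => ?_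
  rw [(hH i j k l m n).1]

lemma alg1 {H : Fin 3 → Fin 3 → Fin 3 → Fin 3 → Fin 3 → Fin 3 → ℝ} (hH : Hsym H)
    (w D : Fin 3 → Fin 3 → Fin 3 → ℝ) :
    ∑ i : Fin 3, ∑ j : Fin 3, ∑ k : Fin 3,
        Hcontr H (fun l m n => (1/2) * (D l m n + D l n m)) i j k * w i j k
      = ∑ i : Fin 3, ∑ j : Fin 3, ∑ k : Fin 3, D i j k * Hcontr H w i j k := by
  have step1 : ∑ i : Fin 3, ∑ j : Fin 3, ∑ k : Fin 3,
        Hcontr H (fun l m n => (1/2) * (D l m n + D l n m)) i j k * w i j k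
      = ∑ i : Fin 3, ∑ j : Fin 3, ∑ k : Fin 3,
          Hcontr H w i j k * ((1/2) * (D i j k + D i k j)) := by
    rw [← contract_symm hH w (fun l m n => (1/2) * (D l m n + D l n m))]
    exact Finset.sum_congr rfl fun i _ => Finset.sum_congr rfl fun j _ =>
      Finset.sum_congr rfl fun k _ => mul_comm _ _
  rw [step1]
  have split : ∀ i j k : Fin 3, Hcontr H w i j k * ((1/2) * (D i j k + D i k j))
      = (1/2) * (Hcontr H w i j k * D i j k) + (1/2) * (Hcontr H w i j k * D i k j) := by
    intro i j k; ring
  simp only [split, Finset.sum_add_distrib]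
  have swap : ∑ i : Fin 3, ∑ j : Fin 3, ∑ k : Fin 3,
        (1/2) * (Hcontr H w i j k * D i k j)
      = ∑ i : Fin 3, ∑ j : Fin 3, ∑ k : Fin 3, (1/2) * (Hcontr H w i j k * D i j k) := by
    refine Finset.sum_congr rfl fun i _ => ?_
    rw [Finset.sum_comm]
    refine Finset.sum_congr rfl fun j _ => Finset.sum_congr rfl fun k _ => ?_
    rw [Hcontr_symm23 hH w i j k]
  rw [swap]
  simp only [← Finset.sum_add_distrib]
  refine Finset.sum_congr rfl fun i _ => Finset.sum_congr rfl fun j _ =>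
    Finset.sum_congr rfl fun k _ => by ring

lemma pd_sum (F : Fin 3 → V → ℝ) (hF : ∀ j, Differentiable ℝ (F j)) (i : Fin 3) (x : V) :
    pd i (fun y => ∑ j : Fin 3, F j y) x = ∑ j : Fin 3, pd i (F j) x := by
  unfold pd
  rw [fderiv_fun_sum (fun j _ => (hF j) x)]
  simp

lemma pd_cmul_add {A B : V → ℝ} (hA : Differentiable ℝ A) (hB : Differentiable ℝ B)
    (c : ℝ) (l : Fin 3) (x : V) :
    pd l (fun y => c * (A y + B y)) x = c * (pd l A x + pd l B x) := by
  unfold pd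
  rw [fderiv_const_mul (a := fun y => A y + B y) ((hA x).add (hB x)) c, fderiv_fun_add (hA x) (hB x)]
  simp [mul_add]

lemma cdiff {f : V → ℝ} (hf : ContDiff ℝ (⊤:ℕ∞) f) : Differentiable ℝ f :=
  hf.differentiable (by simp)

lemma comp_contDiff {u : V → V} (hu : ContDiff ℝ (⊤:ℕ∞) u) (k : Fin 3) :
    ContDiff ℝ (⊤:ℕ∞) (fun y => u y k) := contDiff_pi.mp hu k

lemma comp_hcs {u : V → V} (hc : HasCompactSupport u) (k : Fin 3) :
    HasCompactSupport (fun y => u y k) := hc.comp_left (g := fun v : V => v k) rfl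

lemma nu_comp_contDiff {ν : V → Fin 3 → Fin 3 → Fin 3 → ℝ} (hν : ContDiff ℝ (⊤:ℕ∞) ν)
    (i j k : Fin 3) : ContDiff ℝ (⊤:ℕ∞) (fun y => ν y i j k) :=
  contDiff_pi.mp (contDiff_pi.mp (contDiff_pi.mp hν i) j) k

lemma Hf_contDiff {H : Fin 3 → Fin 3 → Fin 3 → Fin 3 → Fin 3 → Fin 3 → ℝ}
    {ν : V → Fin 3 → Fin 3 → Fin 3 → ℝ} (hν : ContDiff ℝ (⊤:ℕ∞) ν) (i j k : Fin 3) :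
    ContDiff ℝ (⊤:ℕ∞) (fun y => Hcontr H (ν y) i j k) := by
  show ContDiff ℝ (⊤:ℕ∞)
    (fun y => ∑ l : Fin 3, ∑ m : Fin 3, ∑ n : Fin 3, H i j k l m n * ν y l m n)
  refine ContDiff.sum fun l _ => ContDiff.sum fun m _ => ContDiff.sum fun n _ => ?_
  exact contDiff_const.mul (nu_comp_contDiff hν l m n)

lemma Hf_hcs {H : Fin 3 → Fin 3 → Fin 3 → Fin 3 → Fin 3 → Fin 3 → ℝ}
    {ν : V → Fin 3 → Fin 3 → Fin 3 → ℝ} (hc : HasCompactSupport ν) (i j k : Fin 3) :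
    HasCompactSupport (fun y => Hcontr H (ν y) i j k) :=
  hc.comp_left (g := fun w => Hcontr H w i j k) (by simp [Hcontr])

lemma nu_comp_hcs {ν : V → Fin 3 → Fin 3 → Fin 3 → ℝ} (hc : HasCompactSupport ν)
    (i j k : Fin 3) : HasCompactSupport (fun y => ν y i j k) :=
  hc.comp_left (g := fun w : Fin 3 → Fin 3 → Fin 3 → ℝ => w i j k) rfl

lemma strain_contDiff {u : V → V} (hu : ContDiff ℝ (⊤:ℕ∞) u) (j k : Fin 3) :
    ContDiff ℝ (⊤:ℕ∞) (strain u j k) := by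
  show ContDiff ℝ (⊤:ℕ∞)
    (fun x => (1/2) * (pd j (fun y => u y k) x + pd k (fun y => u y j) x))
  exact contDiff_const.mul
    ((pd_contDiff (comp_contDiff hu k) j).add (pd_contDiff (comp_contDiff hu j) k))

lemma gradStrain_contDiff {u : V → V} (hu : ContDiff ℝ (⊤:ℕ∞) u) (i j k : Fin 3) :
    ContDiff ℝ (⊤:ℕ∞) (gradStrain u i j k) :=
  pd_contDiff (strain_contDiff hu j k) i

lemma gs_eq {u : V → V} (hu : ContDiff ℝ (⊤:ℕ∞) u) (l m n : Fin 3) (x : V) :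
    gradStrain u l m n x
      = (1/2) * (pd l (pd m (fun y => u y n)) x + pd l (pd n (fun y => u y m)) x) := by
  show pd l (strain u m n) x = _
  have h : strain u m n
      = fun y => (1/2) * ((pd m (fun z => u z n)) y + (pd n (fun z => u z m)) y) := rfl
  rw [h, pd_cmul_add (cdiff (pd_contDiff (comp_contDiff hu n) m))
    (cdiff (pd_contDiff (comp_contDiff hu m) n)) _ l x]

lemma vlap_contDiff {u : V → V} (hu : ContDiff ℝ (⊤:ℕ∞) u) (k : Fin 3) :
    ContDiff ℝ (⊤:ℕ∞) (vlap u k) := by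
  show ContDiff ℝ (⊤:ℕ∞) (fun x => ∑ j : Fin 3, pd j (pd j (fun y => u y k)) x)
  exact ContDiff.sum fun j _ => pd_contDiff (pd_contDiff (comp_contDiff hu k) j) j

lemma divg_contDiff {u : V → V} (hu : ContDiff ℝ (⊤:ℕ∞) u) :
    ContDiff ℝ (⊤:ℕ∞) (divg u) := by
  show ContDiff ℝ (⊤:ℕ∞) (fun x => ∑ j : Fin 3, pd j (fun y => u y j) x)
  exact ContDiff.sum fun j _ => pd_contDiff (comp_contDiff hu j) j

lemma navier_contDiff (lam mu : ℝ) {u : V → V} (hu : ContDiff ℝ (⊤:ℕ∞) u) (k : Fin 3) :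
    ContDiff ℝ (⊤:ℕ∞) (navier lam mu u k) := by
  show ContDiff ℝ (⊤:ℕ∞)
    (fun x => mu * vlap u k x + (lam + mu) * pd k (divg u) x)
  exact (contDiff_const.mul (vlap_contDiff hu k)).add
    (contDiff_const.mul (pd_contDiff (divg_contDiff hu) k))

lemma pd_divg_eq {u : V → V} (hu : ContDiff ℝ (⊤:ℕ∞) u) (k : Fin 3) (x : V) :
    pd k (divg u) x = ∑ j : Fin 3, pd k (pd j (fun y => u y j)) x :=
  pd_sum (fun j => pd j (fun y => u y j))
    (fun j => cdiff (pd_contDiff (comp_contDiff hu j) j)) k x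

lemma distrL (w a b : ℝ) (X Y : Fin 3 → ℝ) :
    w * (a * (∑ j : Fin 3, X j) + b * (∑ j : Fin 3, Y j))
      = ∑ j : Fin 3, (a * (w * X j) + b * (w * Y j)) := by
  simp only [Finset.sum_add_distrib, ← Finset.mul_sum]; ring

lemma distrR (w a b : ℝ) (X Y : Fin 3 → ℝ) :
    (a * (∑ j : Fin 3, X j) + b * (∑ j : Fin 3, Y j)) * w
      = ∑ j : Fin 3, (a * (X j * w) + b * (Y j * w)) := by
  rw [mul_comm, distrL w a b X Y]
  exact Finset.sum_congr rfl fun j _ => by ring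

/-- Self-adjointness of the Lamé operator. -/
lemma navier_adjoint (lam mu : ℝ) {u w : V → V}
    (hu : ContDiff ℝ (⊤:ℕ∞) u) (hw : ContDiff ℝ (⊤:ℕ∞) w)
    (huc : HasCompactSupport u) (hwc : HasCompactSupport w) :
    ∫ x : V, ∑ k : Fin 3, w x k * navier lam mu u k x
      = ∫ x : V, ∑ k : Fin 3, navier lam mu w k x * u x k := by
  have cw := fun k => comp_contDiff hw k
  have cu := fun k => comp_contDiff hu k
  have intL : ∀ (v v' : V → V), ContDiff ℝ (⊤:ℕ∞) v → ContDiff ℝ (⊤:ℕ∞) v' →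
      HasCompactSupport v → ∀ (k a b c : Fin 3),
      Integrable (fun x : V => v x k * pd a (pd b (fun y => v' y c)) x) := by
    intro v v' hv hv' hvc k a b c
    exact integ_mul_l (comp_contDiff hv k).continuous
      ((pd_contDiff (pd_contDiff (comp_contDiff hv' c) b) a).continuous) (comp_hcs hvc k)
  have expandL : ∫ x : V, ∑ k : Fin 3, w x k * navier lam mu u k x
      = mu * (∑ k : Fin 3, ∑ j : Fin 3, ∫ x : V, w x k * pd j (pd j (fun y => u y k)) x)
        + (lam + mu) * (∑ k : Fin 3, ∑ j : Fin 3,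
            ∫ x : V, w x k * pd k (pd j (fun y => u y j)) x) := by
    have hpt : ∀ x : V, ∑ k : Fin 3, w x k * navier lam mu u k x
        = ∑ k : Fin 3, ∑ j : Fin 3,
            (mu * (w x k * pd j (pd j (fun y => u y k)) x)
              + (lam + mu) * (w x k * pd k (pd j (fun y => u y j)) x)) := by
      intro x
      refine Finset.sum_congr rfl fun k _ => ?_
      have h1 : navier lam mu u k x = mu * vlap u k x + (lam + mu) * pd k (divg u) x := rfl
      have h2 : vlap u k x = ∑ j : Fin 3, pd j (pd j (fun y => u y k)) x := rfl
      rw [h1, h2, pd_divg_eq hu k x]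
      exact distrL (w x k) mu (lam + mu) _ _
    rw [integral_congr_ae (Filter.Eventually.of_forall hpt)]
    rw [isum2 (fun k j (x : V) => mu * (w x k * pd j (pd j (fun y => u y k)) x)
        + (lam + mu) * (w x k * pd k (pd j (fun y => u y j)) x))
      (fun k j => ((intL w u hw hu hwc k j j k).const_mul mu).add
      (((integ_mul_l (cw k).continuous
        ((pd_contDiff (pd_contDiff (cu j) j) k).continuous) (comp_hcs hwc k))).const_mul _))]
    have : ∀ k j : Fin 3, (∫ x : V, (mu * (w x k * pd j (pd j (fun y => u y k)) x)
          + (lam + mu) * (w x k * pd k (pd j (fun y => u y j)) x)))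
        = mu * (∫ x : V, w x k * pd j (pd j (fun y => u y k)) x)
          + (lam + mu) * (∫ x : V, w x k * pd k (pd j (fun y => u y j)) x) := by
      intro k j
      rw [integral_add ((intL w u hw hu hwc k j j k).const_mul mu)
        ((integ_mul_l (cw k).continuous
          ((pd_contDiff (pd_contDiff (cu j) j) k).continuous) (comp_hcs hwc k)).const_mul _),
        integral_const_mul, integral_const_mul]
    simp only [this, Finset.sum_add_distrib, ← Finset.mul_sum]
  have expandR : ∫ x : V, ∑ k : Fin 3, navier lam mu w k x * u x k
      = mu * (∑ k : Fin 3, ∑ j : Fin 3, ∫ x : V, pd j (pd j (fun y => w y k)) x * u x k)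
        + (lam + mu) * (∑ k : Fin 3, ∑ j : Fin 3,
            ∫ x : V, pd k (pd j (fun y => w y j)) x * u x k) := by
    have hpt : ∀ x : V, ∑ k : Fin 3, navier lam mu w k x * u x k
        = ∑ k : Fin 3, ∑ j : Fin 3,
            (mu * (pd j (pd j (fun y => w y k)) x * u x k)
              + (lam + mu) * (pd k (pd j (fun y => w y j)) x * u x k)) := by
      intro x
      refine Finset.sum_congr rfl fun k _ => ?_
      have h1 : navier lam mu w k x = mu * vlap w k x + (lam + mu) * pd k (divg w) x := rfl
      have h2 : vlap w k x = ∑ j : Fin 3, pd j (pd j (fun y => w y k)) x := rfl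
      rw [h1, h2, pd_divg_eq hw k x]
      exact distrR (u x k) mu (lam + mu) _ _
    have int1 : ∀ k j : Fin 3,
        Integrable (fun x : V => pd j (pd j (fun y => w y k)) x * u x k) := fun k j =>
      integ_mul_l ((pd_contDiff (pd_contDiff (cw k) j) j).continuous) (cu k).continuous
        (pd_hcs (pd_hcs (comp_hcs hwc k) j) j)
    have int2 : ∀ k j : Fin 3,
        Integrable (fun x : V => pd k (pd j (fun y => w y j)) x * u x k) := fun k j =>
      integ_mul_l ((pd_contDiff (pd_contDiff (cw j) j) k).continuous) (cu k).continuous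
        (pd_hcs (pd_hcs (comp_hcs hwc j) j) k)
    rw [integral_congr_ae (Filter.Eventually.of_forall hpt)]
    rw [isum2 (fun k j (x : V) => mu * (pd j (pd j (fun y => w y k)) x * u x k)
        + (lam + mu) * (pd k (pd j (fun y => w y j)) x * u x k))
      (fun k j => ((int1 k j).const_mul mu).add ((int2 k j).const_mul _))]
    have : ∀ k j : Fin 3, (∫ x : V, (mu * (pd j (pd j (fun y => w y k)) x * u x k)
          + (lam + mu) * (pd k (pd j (fun y => w y j)) x * u x k)))
        = mu * (∫ x : V, pd j (pd j (fun y => w y k)) x * u x k)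
          + (lam + mu) * (∫ x : V, pd k (pd j (fun y => w y j)) x * u x k) := by
      intro k j
      rw [integral_add ((int1 k j).const_mul mu) ((int2 k j).const_mul _),
        integral_const_mul, integral_const_mul]
    simp only [this, Finset.sum_add_distrib, ← Finset.mul_sum]
  rw [expandL, expandR]
  congr 1
  · congr 1
    refine Finset.sum_congr rfl fun k _ => Finset.sum_congr rfl fun j _ => ?_
    exact ibp2 j j (cw k) (cu k) (comp_hcs hwc k)
  · congr 1
    have step : ∀ k j : Fin 3, ∫ x : V, w x k * pd k (pd j (fun y => u y j)) x
        = ∫ x : V, pd k (pd j (fun y => w y k)) x * u x j := fun k j =>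
      ibp2 k j (cw k) (cu j) (comp_hcs hwc k)
    have swap2 : ∀ k j : Fin 3, (∫ x : V, pd j (pd k (fun y => w y j)) x * u x k)
        = ∫ x : V, pd k (pd j (fun y => w y j)) x * u x k := by
      intro k j
      refine integral_congr_ae (Filter.Eventually.of_forall fun x => ?_)
      show pd j (pd k (fun y => w y j)) x * u x k = pd k (pd j (fun y => w y j)) x * u x k
      rw [pd_comm (cw j) j k]
    calc ∑ k : Fin 3, ∑ j : Fin 3, ∫ x : V, w x k * pd k (pd j (fun y => u y j)) x
        = ∑ k : Fin 3, ∑ j : Fin 3, ∫ x : V, pd k (pd j (fun y => w y k)) x * u x j :=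
          Finset.sum_congr rfl fun k _ => Finset.sum_congr rfl fun j _ => step k j
      _ = ∑ k : Fin 3, ∑ j : Fin 3, ∫ x : V, pd j (pd k (fun y => w y j)) x * u x k :=
          Finset.sum_comm
      _ = ∑ k : Fin 3, ∑ j : Fin 3, ∫ x : V, pd k (pd j (fun y => w y j)) x * u x k :=
          Finset.sum_congr rfl fun k _ => Finset.sum_congr rfl fun j _ => swap2 k j

lemma Hgs_contDiff {H : Fin 3 → Fin 3 → Fin 3 → Fin 3 → Fin 3 → Fin 3 → ℝ}
    {u : V → V} (hu : ContDiff ℝ (⊤:ℕ∞) u) (i j k : Fin 3) :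
    ContDiff ℝ (⊤:ℕ∞) (fun x => Hcontr H (fun l m n => gradStrain u l m n x) i j k) := by
  show ContDiff ℝ (⊤:ℕ∞)
    (fun x => ∑ l : Fin 3, ∑ m : Fin 3, ∑ n : Fin 3, H i j k l m n * gradStrain u l m n x)
  refine ContDiff.sum fun l _ => ContDiff.sum fun m _ => ContDiff.sum fun n _ => ?_
  exact contDiff_const.mul (gradStrain_contDiff hu l m n)

/-- The key cross integration-by-parts identity. -/
lemma cross_ibp {H : Fin 3 → Fin 3 → Fin 3 → Fin 3 → Fin 3 → Fin 3 → ℝ} (hH : Hsym H)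
    {w : V → V} {ν : V → Fin 3 → Fin 3 → Fin 3 → ℝ}
    (hw : ContDiff ℝ (⊤:ℕ∞) w) (hν : ContDiff ℝ (⊤:ℕ∞) ν)
    (hwc : HasCompactSupport w) :
    ∫ x : V, ∑ k : Fin 3, w x k *
        ∑ i : Fin 3, ∑ j : Fin 3, pd i (pd j (fun y => Hcontr H (ν y) i j k)) x
      = ∫ x : V, ∑ i : Fin 3, ∑ j : Fin 3, ∑ k : Fin 3,
          Hcontr H (fun l m n => gradStrain w l m n x) i j k * ν x i j k := by
  have cw := fun k => comp_contDiff hw k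
  have cH := fun i j k => Hf_contDiff (H := H) hν i j k
  have step0 : ∀ x : V, (∑ k : Fin 3, w x k *
        ∑ i : Fin 3, ∑ j : Fin 3, pd i (pd j (fun y => Hcontr H (ν y) i j k)) x)
      = ∑ k : Fin 3, ∑ i : Fin 3, ∑ j : Fin 3,
          w x k * pd i (pd j (fun y => Hcontr H (ν y) i j k)) x := by
    intro x; simp only [Finset.mul_sum]
  have ptfinal : ∀ x : V,
      (∑ k : Fin 3, ∑ i : Fin 3, ∑ j : Fin 3,
          pd i (pd j (fun y => w y k)) x * Hcontr H (ν x) i j k)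
        = ∑ i : Fin 3, ∑ j : Fin 3, ∑ k : Fin 3,
            Hcontr H (fun l m n => gradStrain w l m n x) i j k * ν x i j k := by
    intro x
    rw [sum3_rot (fun i j k => pd i (pd j (fun y => w y k)) x * Hcontr H (ν x) i j k)]
    have hgs : (fun l m n => gradStrain w l m n x)
        = fun l m n => (1/2) * (pd l (pd m (fun y => w y n)) x
            + pd l (pd n (fun y => w y m)) x) := by
      funext l m n; exact gs_eq hw l m n x
    rw [hgs]
    exact (alg1 hH (ν x) (fun l m n => pd l (pd m (fun y => w y n)) x)).symm
  calc ∫ x : V, ∑ k : Fin 3, w x k *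
        ∑ i : Fin 3, ∑ j : Fin 3, pd i (pd j (fun y => Hcontr H (ν y) i j k)) x
      = ∫ x : V, ∑ k : Fin 3, ∑ i : Fin 3, ∑ j : Fin 3,
          w x k * pd i (pd j (fun y => Hcontr H (ν y) i j k)) x :=
        integral_congr_ae (Filter.Eventually.of_forall step0)
    _ = ∑ k : Fin 3, ∑ i : Fin 3, ∑ j : Fin 3,
          ∫ x : V, w x k * pd i (pd j (fun y => Hcontr H (ν y) i j k)) x :=
        isum3 (fun k i j x => w x k * pd i (pd j (fun y => Hcontr H (ν y) i j k)) x)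
          (fun k i j => integ_mul_l (cw k).continuous
            ((pd_contDiff (pd_contDiff (cH i j k) j) i).continuous) (comp_hcs hwc k))
    _ = ∑ k : Fin 3, ∑ i : Fin 3, ∑ j : Fin 3,
          ∫ x : V, pd i (pd j (fun y => w y k)) x * Hcontr H (ν x) i j k :=
        Finset.sum_congr rfl fun k _ => Finset.sum_congr rfl fun i _ =>
          Finset.sum_congr rfl fun j _ =>
            ibp2 i j (cw k) (cH i j k) (comp_hcs hwc k)
    _ = ∫ x : V, ∑ k : Fin 3, ∑ i : Fin 3, ∑ j : Fin 3,
          pd i (pd j (fun y => w y k)) x * Hcontr H (ν x) i j k :=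
        (isum3 (fun k i j x => pd i (pd j (fun y => w y k)) x * Hcontr H (ν x) i j k)
          (fun k i j => integ_mul_l
            ((pd_contDiff (pd_contDiff (cw k) j) i).continuous) (cH i j k).continuous
            (pd_hcs (pd_hcs (comp_hcs hwc k) j) i))).symm
    _ = ∫ x : V, ∑ i : Fin 3, ∑ j : Fin 3, ∑ k : Fin 3,
          Hcontr H (fun l m n => gradStrain w l m n x) i j k * ν x i j k :=
        integral_congr_ae (Filter.Eventually.of_forall ptfinal)

/-- the operator `A₊` is formally symmetric on smooth compactly supported
fields. -/
theorem Aplus_formally_symmetric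
    (lam mu : ℝ) (H : Fin 3 → Fin 3 → Fin 3 → Fin 3 → Fin 3 → Fin 3 → ℝ) (hH : Hsym H)
    (u₁ u₂ : V → V) (ν₁ ν₂ : V → Fin 3 → Fin 3 → Fin 3 → ℝ)
    (hu₁ : ContDiff ℝ (⊤ : ℕ∞) u₁) (hu₂ : ContDiff ℝ (⊤ : ℕ∞) u₂)
    (hν₁ : ContDiff ℝ (⊤ : ℕ∞) ν₁) (hν₂ : ContDiff ℝ (⊤ : ℕ∞) ν₂)
    (hu₁c : HasCompactSupport u₁) (hu₂c : HasCompactSupport u₂)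
    (hν₁c : HasCompactSupport ν₁) (hν₂c : HasCompactSupport ν₂)
    (hsym₁ : ∀ x, SymTriadic (ν₁ x)) (hsym₂ : ∀ x, SymTriadic (ν₂ x))
    -- first component of `A₊(u,ν̃)`
    (A1 : (V → V) → (V → Fin 3 → Fin 3 → Fin 3 → ℝ) → Fin 3 → V → ℝ)
    (hA1 : A1 = fun u ν k x =>
      -(navier lam mu u k x)
        + ∑ i : Fin 3, ∑ j : Fin 3, pd i (pd j (fun y => Hcontr H (ν y) i j k)) x)
    -- second component of `A₊(u,ν̃)`
    (A2 : (V → V) → (V → Fin 3 → Fin 3 → Fin 3 → ℝ) → Fin 3 → Fin 3 → Fin 3 → V → ℝ)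
    (hA2 : A2 = fun u ν i j k x =>
      Hcontr H (fun l m n => gradStrain u l m n x) i j k - Hcontr H (ν x) i j k) :
    (∫ x : V, ∑ k : Fin 3, u₁ x k * A1 u₂ ν₂ k x)
      + (∫ x : V, ∑ i : Fin 3, ∑ j : Fin 3, ∑ k : Fin 3, ν₁ x i j k * A2 u₂ ν₂ i j k x)
    = (∫ x : V, ∑ k : Fin 3, A1 u₁ ν₁ k x * u₂ x k)
      + (∫ x : V, ∑ i : Fin 3, ∑ j : Fin 3, ∑ k : Fin 3, A2 u₁ ν₁ i j k x * ν₂ x i j k) := by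
  subst hA1 hA2
  -- integrability facts
  have cnav₂ := fun k => navier_contDiff lam mu hu₂ k
  have cnav₁ := fun k => navier_contDiff lam mu hu₁ k
  have cS₂ : ∀ k : Fin 3, ContDiff ℝ (⊤:ℕ∞) (fun x : V =>
      ∑ i : Fin 3, ∑ j : Fin 3, pd i (pd j (fun y => Hcontr H (ν₂ y) i j k)) x) :=
    fun k => ContDiff.sum fun i _ => ContDiff.sum fun j _ =>
      pd_contDiff (pd_contDiff (Hf_contDiff hν₂ i j k) j) i
  have cS₁ : ∀ k : Fin 3, ContDiff ℝ (⊤:ℕ∞) (fun x : V =>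
      ∑ i : Fin 3, ∑ j : Fin 3, pd i (pd j (fun y => Hcontr H (ν₁ y) i j k)) x) :=
    fun k => ContDiff.sum fun i _ => ContDiff.sum fun j _ =>
      pd_contDiff (pd_contDiff (Hf_contDiff hν₁ i j k) j) i
  have intN : Integrable (fun x : V => ∑ k : Fin 3, u₁ x k * navier lam mu u₂ k x) :=
    integrable_finset_sum _ fun k _ => integ_mul_l (comp_contDiff hu₁ k).continuous
      (cnav₂ k).continuous (comp_hcs hu₁c k)
  have intB : Integrable (fun x : V => ∑ k : Fin 3, u₁ x k *
      ∑ i : Fin 3, ∑ j : Fin 3, pd i (pd j (fun y => Hcontr H (ν₂ y) i j k)) x) :=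
    integrable_finset_sum _ fun k _ => integ_mul_l (comp_contDiff hu₁ k).continuous
      (cS₂ k).continuous (comp_hcs hu₁c k)
  have intC : Integrable (fun x : V => ∑ i : Fin 3, ∑ j : Fin 3, ∑ k : Fin 3,
      ν₁ x i j k * Hcontr H (fun l m n => gradStrain u₂ l m n x) i j k) :=
    integrable_finset_sum _ fun i _ => integrable_finset_sum _ fun j _ =>
      integrable_finset_sum _ fun k _ =>
        integ_mul_l (nu_comp_contDiff hν₁ i j k).continuous
          (Hgs_contDiff hu₂ i j k).continuous (nu_comp_hcs hν₁c i j k)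
  have intD : Integrable (fun x : V => ∑ i : Fin 3, ∑ j : Fin 3, ∑ k : Fin 3,
      ν₁ x i j k * Hcontr H (ν₂ x) i j k) :=
    integrable_finset_sum _ fun i _ => integrable_finset_sum _ fun j _ =>
      integrable_finset_sum _ fun k _ =>
        integ_mul_l (nu_comp_contDiff hν₁ i j k).continuous
          (Hf_contDiff hν₂ i j k).continuous (nu_comp_hcs hν₁c i j k)
  have intN' : Integrable (fun x : V => ∑ k : Fin 3, navier lam mu u₁ k x * u₂ x k) :=
    integrable_finset_sum _ fun k _ => integ_mul_r (cnav₁ k).continuous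
      (comp_contDiff hu₂ k).continuous (comp_hcs hu₂c k)
  have intB' : Integrable (fun x : V => ∑ k : Fin 3,
      (∑ i : Fin 3, ∑ j : Fin 3, pd i (pd j (fun y => Hcontr H (ν₁ y) i j k)) x) * u₂ x k) :=
    integrable_finset_sum _ fun k _ => integ_mul_r (cS₁ k).continuous
      (comp_contDiff hu₂ k).continuous (comp_hcs hu₂c k)
  have intC' : Integrable (fun x : V => ∑ i : Fin 3, ∑ j : Fin 3, ∑ k : Fin 3,
      Hcontr H (fun l m n => gradStrain u₁ l m n x) i j k * ν₂ x i j k) :=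
    integrable_finset_sum _ fun i _ => integrable_finset_sum _ fun j _ =>
      integrable_finset_sum _ fun k _ =>
        integ_mul_r (Hgs_contDiff hu₁ i j k).continuous
          (nu_comp_contDiff hν₂ i j k).continuous (nu_comp_hcs hν₂c i j k)
  have intD' : Integrable (fun x : V => ∑ i : Fin 3, ∑ j : Fin 3, ∑ k : Fin 3,
      Hcontr H (ν₁ x) i j k * ν₂ x i j k) :=
    integrable_finset_sum _ fun i _ => integrable_finset_sum _ fun j _ =>
      integrable_finset_sum _ fun k _ =>
        integ_mul_r (Hf_contDiff hν₁ i j k).continuous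
          (nu_comp_contDiff hν₂ i j k).continuous (nu_comp_hcs hν₂c i j k)
  -- splitting the four integrals
  have splitL1 : (∫ x : V, ∑ k : Fin 3, u₁ x k * (-(navier lam mu u₂ k x)
        + ∑ i : Fin 3, ∑ j : Fin 3, pd i (pd j (fun y => Hcontr H (ν₂ y) i j k)) x))
      = -(∫ x : V, ∑ k : Fin 3, u₁ x k * navier lam mu u₂ k x)
        + ∫ x : V, ∑ k : Fin 3, u₁ x k *
            ∑ i : Fin 3, ∑ j : Fin 3, pd i (pd j (fun y => Hcontr H (ν₂ y) i j k)) x := by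
    have hpt : ∀ x : V, (∑ k : Fin 3, u₁ x k * (-(navier lam mu u₂ k x)
          + ∑ i : Fin 3, ∑ j : Fin 3, pd i (pd j (fun y => Hcontr H (ν₂ y) i j k)) x))
        = (fun x : V => -(∑ k : Fin 3, u₁ x k * navier lam mu u₂ k x)
          + ∑ k : Fin 3, u₁ x k *
              ∑ i : Fin 3, ∑ j : Fin 3, pd i (pd j (fun y => Hcontr H (ν₂ y) i j k)) x) x := by
      intro x
      show _ = -(∑ k : Fin 3, u₁ x k * navier lam mu u₂ k x) + _
      rw [← Finset.sum_neg_distrib, ← Finset.sum_add_distrib]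
      exact Finset.sum_congr rfl fun k _ => by ring
    have intNneg : Integrable (fun x : V =>
        -(∑ k : Fin 3, u₁ x k * navier lam mu u₂ k x)) := intN.neg
    rw [integral_congr_ae (Filter.Eventually.of_forall hpt), integral_add intNneg intB,
      integral_neg]
  have splitL2 : (∫ x : V, ∑ i : Fin 3, ∑ j : Fin 3, ∑ k : Fin 3, ν₁ x i j k *
        (Hcontr H (fun l m n => gradStrain u₂ l m n x) i j k - Hcontr H (ν₂ x) i j k))
      = (∫ x : V, ∑ i : Fin 3, ∑ j : Fin 3, ∑ k : Fin 3,
          ν₁ x i j k * Hcontr H (fun l m n => gradStrain u₂ l m n x) i j k)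
        - ∫ x : V, ∑ i : Fin 3, ∑ j : Fin 3, ∑ k : Fin 3,
            ν₁ x i j k * Hcontr H (ν₂ x) i j k := by
    have hpt : ∀ x : V, (∑ i : Fin 3, ∑ j : Fin 3, ∑ k : Fin 3, ν₁ x i j k *
          (Hcontr H (fun l m n => gradStrain u₂ l m n x) i j k - Hcontr H (ν₂ x) i j k))
        = (fun x : V => (∑ i : Fin 3, ∑ j : Fin 3, ∑ k : Fin 3,
              ν₁ x i j k * Hcontr H (fun l m n => gradStrain u₂ l m n x) i j k)
            - ∑ i : Fin 3, ∑ j : Fin 3, ∑ k : Fin 3,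
                ν₁ x i j k * Hcontr H (ν₂ x) i j k) x := by
      intro x
      show _ = (∑ i : Fin 3, ∑ j : Fin 3, ∑ k : Fin 3,
          ν₁ x i j k * Hcontr H (fun l m n => gradStrain u₂ l m n x) i j k) - _
      rw [sub_eq_add_neg, ← Finset.sum_neg_distrib, ← Finset.sum_add_distrib]
      refine Finset.sum_congr rfl fun i _ => ?_
      rw [← Finset.sum_neg_distrib, ← Finset.sum_add_distrib]
      refine Finset.sum_congr rfl fun j _ => ?_
      rw [← Finset.sum_neg_distrib, ← Finset.sum_add_distrib]
      exact Finset.sum_congr rfl fun k _ => by ring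
    rw [integral_congr_ae (Filter.Eventually.of_forall hpt), integral_sub intC intD]
  have splitR1 : (∫ x : V, ∑ k : Fin 3, (-(navier lam mu u₁ k x)
        + ∑ i : Fin 3, ∑ j : Fin 3, pd i (pd j (fun y => Hcontr H (ν₁ y) i j k)) x) * u₂ x k)
      = -(∫ x : V, ∑ k : Fin 3, navier lam mu u₁ k x * u₂ x k)
        + ∫ x : V, ∑ k : Fin 3,
            (∑ i : Fin 3, ∑ j : Fin 3, pd i (pd j (fun y => Hcontr H (ν₁ y) i j k)) x)
              * u₂ x k := by
    have hpt : ∀ x : V, (∑ k : Fin 3, (-(navier lam mu u₁ k x)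
          + ∑ i : Fin 3, ∑ j : Fin 3, pd i (pd j (fun y => Hcontr H (ν₁ y) i j k)) x) * u₂ x k)
        = (fun x : V => -(∑ k : Fin 3, navier lam mu u₁ k x * u₂ x k)
          + ∑ k : Fin 3,
              (∑ i : Fin 3, ∑ j : Fin 3, pd i (pd j (fun y => Hcontr H (ν₁ y) i j k)) x)
                * u₂ x k) x := by
      intro x
      show _ = -(∑ k : Fin 3, navier lam mu u₁ k x * u₂ x k) + _
      rw [← Finset.sum_neg_distrib, ← Finset.sum_add_distrib]
      exact Finset.sum_congr rfl fun k _ => by ring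
    have intNneg' : Integrable (fun x : V =>
        -(∑ k : Fin 3, navier lam mu u₁ k x * u₂ x k)) := intN'.neg
    rw [integral_congr_ae (Filter.Eventually.of_forall hpt), integral_add intNneg' intB',
      integral_neg]
  have splitR2 : (∫ x : V, ∑ i : Fin 3, ∑ j : Fin 3, ∑ k : Fin 3,
        (Hcontr H (fun l m n => gradStrain u₁ l m n x) i j k - Hcontr H (ν₁ x) i j k)
          * ν₂ x i j k)
      = (∫ x : V, ∑ i : Fin 3, ∑ j : Fin 3, ∑ k : Fin 3,
          Hcontr H (fun l m n => gradStrain u₁ l m n x) i j k * ν₂ x i j k)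
        - ∫ x : V, ∑ i : Fin 3, ∑ j : Fin 3, ∑ k : Fin 3,
            Hcontr H (ν₁ x) i j k * ν₂ x i j k := by
    have hpt : ∀ x : V, (∑ i : Fin 3, ∑ j : Fin 3, ∑ k : Fin 3,
          (Hcontr H (fun l m n => gradStrain u₁ l m n x) i j k - Hcontr H (ν₁ x) i j k)
            * ν₂ x i j k)
        = (fun x : V => (∑ i : Fin 3, ∑ j : Fin 3, ∑ k : Fin 3,
              Hcontr H (fun l m n => gradStrain u₁ l m n x) i j k * ν₂ x i j k)
            - ∑ i : Fin 3, ∑ j : Fin 3, ∑ k : Fin 3,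
                Hcontr H (ν₁ x) i j k * ν₂ x i j k) x := by
      intro x
      show _ = (∑ i : Fin 3, ∑ j : Fin 3, ∑ k : Fin 3,
          Hcontr H (fun l m n => gradStrain u₁ l m n x) i j k * ν₂ x i j k) - _
      rw [sub_eq_add_neg, ← Finset.sum_neg_distrib, ← Finset.sum_add_distrib]
      refine Finset.sum_congr rfl fun i _ => ?_
      rw [← Finset.sum_neg_distrib, ← Finset.sum_add_distrib]
      refine Finset.sum_congr rfl fun j _ => ?_
      rw [← Finset.sum_neg_distrib, ← Finset.sum_add_distrib]
      exact Finset.sum_congr rfl fun k _ => by ring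
    rw [integral_congr_ae (Filter.Eventually.of_forall hpt), integral_sub intC' intD']
  rw [splitL1, splitL2, splitR1, splitR2]
  have e1 : (∫ x : V, ∑ k : Fin 3, u₁ x k * navier lam mu u₂ k x)
      = ∫ x : V, ∑ k : Fin 3, navier lam mu u₁ k x * u₂ x k :=
    navier_adjoint lam mu hu₂ hu₁ hu₂c hu₁c
  have e2 : (∫ x : V, ∑ k : Fin 3, u₁ x k *
        ∑ i : Fin 3, ∑ j : Fin 3, pd i (pd j (fun y => Hcontr H (ν₂ y) i j k)) x)
      = ∫ x : V, ∑ i : Fin 3, ∑ j : Fin 3, ∑ k : Fin 3,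
          Hcontr H (fun l m n => gradStrain u₁ l m n x) i j k * ν₂ x i j k :=
    cross_ibp hH hu₁ hν₂ hu₁c
  have e3 : (∫ x : V, ∑ i : Fin 3, ∑ j : Fin 3, ∑ k : Fin 3,
        ν₁ x i j k * Hcontr H (fun l m n => gradStrain u₂ l m n x) i j k)
      = ∫ x : V, ∑ k : Fin 3,
          (∑ i : Fin 3, ∑ j : Fin 3, pd i (pd j (fun y => Hcontr H (ν₁ y) i j k)) x)
            * u₂ x k := by
    calc (∫ x : V, ∑ i : Fin 3, ∑ j : Fin 3, ∑ k : Fin 3,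
          ν₁ x i j k * Hcontr H (fun l m n => gradStrain u₂ l m n x) i j k)
        = ∫ x : V, ∑ i : Fin 3, ∑ j : Fin 3, ∑ k : Fin 3,
            Hcontr H (fun l m n => gradStrain u₂ l m n x) i j k * ν₁ x i j k :=
          integral_congr_ae (Filter.Eventually.of_forall fun x =>
            Finset.sum_congr rfl fun i _ => Finset.sum_congr rfl fun j _ =>
              Finset.sum_congr rfl fun k _ => mul_comm _ _)
      _ = ∫ x : V, ∑ k : Fin 3, u₂ x k *
            ∑ i : Fin 3, ∑ j : Fin 3, pd i (pd j (fun y => Hcontr H (ν₁ y) i j k)) x :=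
          (cross_ibp hH hu₂ hν₁ hu₂c).symm
      _ = ∫ x : V, ∑ k : Fin 3,
            (∑ i : Fin 3, ∑ j : Fin 3, pd i (pd j (fun y => Hcontr H (ν₁ y) i j k)) x)
              * u₂ x k :=
          integral_congr_ae (Filter.Eventually.of_forall fun x =>
            Finset.sum_congr rfl fun k _ => mul_comm _ _)
  have e4 : (∫ x : V, ∑ i : Fin 3, ∑ j : Fin 3, ∑ k : Fin 3,
        ν₁ x i j k * Hcontr H (ν₂ x) i j k)
      = ∫ x : V, ∑ i : Fin 3, ∑ j : Fin 3, ∑ k : Fin 3,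
          Hcontr H (ν₁ x) i j k * ν₂ x i j k :=
    integral_congr_ae (Filter.Eventually.of_forall fun x => contract_symm hH (ν₁ x) (ν₂ x))
  rw [e1, e2, e3, e4]
  ring
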